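/- Let X be a compact metric space and let ℝ^d act continuously on X by translation (S, x) ↦ S + x, with the action of ℝ^d on X minimal. Let B = {b₁, …, b_d} be a basis of ℝ^d and let A ⊆ X be a closed set invariant under translation by every element of the lattice Γ = ℤb₁ + ⋯ + ℤb_d (i.e. A + γ = A for γ ∈ Γ). If A is nonempty, then for every R ∈ X there exists a sequence (y_j) in ℝ^d, convergent modulo Γ, and a point S ∈ A such that S + y_j → R; consequently every R ∈ X lies in A + y for some y ∈ ℝ^d. -/

import Mathlib

/-- In a minimal continuous ℝ^d-action on a compact metric space,
a nonempty closed set A invariant under a full-rank lattice Γ reaches every point: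
every R is a limit of translates (along a sequence convergent mod Γ) of a point of A,
and consequently lies in some translate of A. -/
theorem stmt16 (d : ℕ) (X : Type*) [MetricSpace X] [CompactSpace X]
    (act : X → EuclideanSpace ℝ (Fin d) → X)
    (hcont : Continuous fun p : X × EuclideanSpace ℝ (Fin d) => act p.1 p.2)
    (hzero : ∀ S, act S 0 = S)
    (hadd : ∀ S x y, act (act S x) y = act S (x + y))
    (hmin : ∀ S : X, Dense (Set.range (act S)))
    (b : Module.Basis (Fin d) ℝ (EuclideanSpace ℝ (Fin d)))
    (A : Set X) (hclosed : IsClosed A) (hne : A.Nonempty)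
    (hinv : ∀ S ∈ A, ∀ γ : Fin d → ℤ, act S (∑ i, γ i • b i) ∈ A) :
    ∀ R : X,
      (∃ S ∈ A, ∃ y : ℕ → EuclideanSpace ℝ (Fin d),
        (∃ γ : ℕ → (Fin d → ℤ), ∃ z : EuclideanSpace ℝ (Fin d),
          Filter.Tendsto (fun j => y j - ∑ i, γ j i • b i) Filter.atTop (nhds z)) ∧
        Filter.Tendsto (fun j => act S (y j)) Filter.atTop (nhds R)) ∧
      (∃ S' ∈ A, ∃ y₀ : EuclideanSpace ℝ (Fin d), act S' y₀ = R) := by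
  intro R
  obtain ⟨S0, hS0⟩ := hne
  have hx : ∀ n : ℕ, ∃ x, dist (act S0 x) R < 1/(n+1) := by
    intro n
    have h1 : (R : X) ∈ closure (Set.range (act S0)) := hmin S0 R
    rw [Metric.mem_closure_iff] at h1
    obtain ⟨p, hp, hd⟩ := h1 (1/(n+1)) (by positivity)
    obtain ⟨x, rfl⟩ := hp
    exact ⟨x, by rwa [dist_comm]⟩
  choose x hxd using hx
  set g : ℕ → EuclideanSpace ℝ (Fin d) :=
    fun n => ∑ i, (⌊b.repr (x n) i⌋ : ℤ) • b i with hg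
  set f : ℕ → EuclideanSpace ℝ (Fin d) := fun n => x n - g n with hf
  have hfrac : ∀ n, f n = ∑ i, Int.fract (b.repr (x n) i) • b i := by
    intro n
    have hx' : (∑ i, b.repr (x n) i • b i) = x n := b.sum_repr (x n)
    have h2 : (∑ i, Int.fract (b.repr (x n) i) • b i)
        = ∑ i, (b.repr (x n) i • b i - (⌊b.repr (x n) i⌋ : ℤ) • b i) :=
      Finset.sum_congr rfl (fun i _ => by
        rw [Int.fract, sub_smul, Int.cast_smul_eq_zsmul])
    rw [h2, Finset.sum_sub_distrib, hx']
  have hfK : ∀ n, f n ∈ Metric.closedBall (0:EuclideanSpace ℝ (Fin d)) (∑ i, ‖b i‖) := by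
    intro n
    rw [Metric.mem_closedBall, dist_zero_right, hfrac n]
    calc ‖∑ i, Int.fract (b.repr (x n) i) • b i‖
        ≤ ∑ i, ‖Int.fract (b.repr (x n) i) • b i‖ := norm_sum_le _ _
      _ ≤ ∑ i, ‖b i‖ := by
          apply Finset.sum_le_sum
          intro i _
          rw [norm_smul, Real.norm_eq_abs,
            abs_of_nonneg (Int.fract_nonneg _)]
          nlinarith [Int.fract_lt_one (b.repr (x n) i), norm_nonneg (b i),
            Int.fract_nonneg (b.repr (x n) i)]
  obtain ⟨z, hzK, φ, hφ, hzt⟩ :=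
    (isCompact_closedBall (0:EuclideanSpace ℝ (Fin d)) _).tendsto_subseq hfK
  have hA : ∀ n, act S0 (g (φ n)) ∈ A := fun n =>
    hinv S0 hS0 (fun i => ⌊b.repr (x (φ n)) i⌋)
  obtain ⟨S', hS', ψ, hψ, hSt⟩ := (hclosed.isCompact).tendsto_subseq hA
  -- the combined subsequence
  have hkey : ∀ n, act S0 (x (φ (ψ n))) = act (act S0 (g (φ (ψ n)))) (f (φ (ψ n))) := by
    intro n
    rw [hadd]
    congr 1
    simp [hf]
  have hlim1 : Filter.Tendsto (fun n => act S0 (x (φ (ψ n)))) Filter.atTop (nhds (act S' z)) := by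
    have h1 : Filter.Tendsto (fun n => (act S0 (g (φ (ψ n))), f (φ (ψ n))))
        Filter.atTop (nhds (S', z)) :=
      (hSt.prodMk_nhds (hzt.comp hψ.tendsto_atTop))
    have := (hcont.tendsto (S', z)).comp h1
    simpa [hkey, Function.comp_def] using this
  have hlim2 : Filter.Tendsto (fun n => act S0 (x (φ (ψ n)))) Filter.atTop (nhds R) := by
    rw [tendsto_iff_dist_tendsto_zero]
    apply squeeze_zero (fun n => dist_nonneg) ?_
      tendsto_one_div_add_atTop_nhds_zero_nat
    intro n
    have h1 := hxd (φ (ψ n))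
    have hle : (n:ℝ) + 1 ≤ (φ (ψ n) : ℝ) + 1 := by
      have : n ≤ φ (ψ n) := (hφ.comp hψ).le_apply
      exact_mod_cast Nat.add_le_add_right this 1
    have h2 : (1:ℝ)/((φ (ψ n) : ℝ)+1) ≤ 1/((n:ℝ)+1) := by
      apply one_div_le_one_div_of_le (by positivity) hle
    linarith
  have hact : act S' z = R := tendsto_nhds_unique hlim1 hlim2
  constructor
  · exact ⟨S', hS', fun _ => z, ⟨fun _ _ => 0, z, by simp⟩,
      by simp [hact]⟩
  · exact ⟨S', hS', z, hact⟩
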